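/- Let 1 ≤ d ≤ q-3 and m = q-1-d. The number G_q(d) of tuples (x_1,...,x_{q-1}) of pairwise distinct nonzero elements of F_q satisfying simultaneously Σ_{i=1}^{q-1} ω^{(i-1)l} x_i = 0 for every l = 1, 2, ..., m equals the number of permutations σ ∈ S_{q-1} such that Σ_{i=1}^{q-1} ω^{(i-1)l} ω^{σ(i)} = 0 for all l = 1, ..., m; and N_q(d) = (q-1)! - Σ_{e=d+1}^{q-2} N_q(e) - G_q(d). -/

import Mathlib

open Polynomial Finset

section Aux

variable {F : Type*} [Field F] [Fintype F]

private lemma aux_sum_pow (j : ℕ) (hj : j ≠ 0) :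
    ∑ a : F, a ^ j = if (Fintype.card F - 1) ∣ j then -1 else 0 := by
  classical
  have h0 : ∑ a : F, a ^ j = ∑ x : Fˣ, ((x : F)) ^ j := by
    let φ : Fˣ ↪ F := ⟨fun x ↦ (x : F), fun _ _ => Units.ext⟩
    have hmap : Finset.univ.map φ = Finset.univ \ {0} := by
      ext x
      simp only [Finset.mem_map, Finset.mem_univ, Function.Embedding.coeFn_mk, true_and,
        Finset.mem_sdiff, Finset.mem_singleton, φ]
      exact isUnit_iff_ne_zero
    rw [show ∑ a : F, a ^ j = ∑ a ∈ Finset.univ \ {(0:F)}, a ^ j from ?_, ← hmap, Finset.sum_map]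
    · rfl
    · rw [← Finset.sum_sdiff (Finset.subset_univ {(0:F)}), Finset.sum_singleton,
        zero_pow hj, add_zero]
  rw [h0, ← FiniteField.sum_pow_units F j]

private lemma key_sum (h4 : 4 ≤ Fintype.card F) (f : F[X])
    (hf : f.natDegree ≤ Fintype.card F - 1) (l : ℕ) (hl : l ≤ Fintype.card F - 2) :
    ∑ a : F, a ^ l * f.eval a = - f.coeff (Fintype.card F - 1 - l) := by
  classical
  set q := Fintype.card F with hqdef
  have hflt : f.natDegree < q := by omega
  have h1 : ∀ a : F, a ^ l * f.eval a = ∑ k ∈ Finset.range q, f.coeff k * a ^ (k + l) := by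
    intro a
    rw [eval_eq_sum_range' hflt, Finset.mul_sum]
    exact Finset.sum_congr rfl fun k _ => by ring
  calc ∑ a : F, a ^ l * f.eval a
      = ∑ k ∈ Finset.range q, f.coeff k * ∑ a : F, a ^ (k + l) := by
        simp_rw [h1]
        rw [Finset.sum_comm]
        exact Finset.sum_congr rfl fun k _ => by rw [Finset.mul_sum]
    _ = ∑ k ∈ Finset.range q, (if k = q - 1 - l then - f.coeff k else 0) := by
        refine Finset.sum_congr rfl fun k hk => ?_
        rw [Finset.mem_range] at hk
        by_cases h0 : k + l = 0
        · have hk0 : k = 0 := by omega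
          have hl0 : l = 0 := by omega
          subst hk0; subst hl0
          rw [if_neg (by omega)]
          simp only [add_zero, pow_zero, Finset.sum_const, Finset.card_univ, nsmul_eq_mul,
            mul_one]
          rw [FiniteField.cast_card_eq_zero, mul_zero]
        · rw [aux_sum_pow _ h0]
          by_cases hdvd : (q - 1) ∣ (k + l)
          · obtain ⟨c, hc⟩ := hdvd
            have hc1 : c = 1 := by
              rcases c with _ | _ | c
              · omega
              · rfl
              · rw [Nat.mul_succ, Nat.mul_succ] at hc
                omega
            subst hc1
            rw [Nat.mul_one] at hc
            rw [if_pos ⟨1, by omega⟩, if_pos (by omega), mul_neg_one]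
          · rw [if_neg hdvd, if_neg (fun h => hdvd ⟨1, by omega⟩), mul_zero]
    _ = - f.coeff (q - 1 - l) := by
        rw [Finset.sum_ite_eq' (Finset.range q)]
        rw [if_pos (Finset.mem_range.2 (by omega))]

private lemma poly_funext {f g : F[X]} (hf : f.natDegree < Fintype.card F)
    (hg : g.natDegree < Fintype.card F) (h : ∀ a : F, f.eval a = g.eval a) : f = g := by
  have h1 : f - g = 0 := by
    apply Polynomial.eq_zero_of_natDegree_lt_card_of_eval_eq_zero (f - g) (f := (id : F → F))
      Function.injective_id
    · intro a; simp [h a]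
    · calc (f - g).natDegree ≤ max f.natDegree g.natDegree := natDegree_sub_le f g
        _ < Fintype.card F := by omega
  exact sub_eq_zero.mp h1

end Aux

section Aux2

variable {F : Type*} [Field F] [Fintype F]

private lemma ncard_ne_zero : Nat.card {a : F // a ≠ 0} = Fintype.card F - 1 := by
  rw [← Nat.card_congr (unitsEquivNeZero (G₀ := F)), Nat.card_units, Nat.card_eq_fintype_card]

private lemma omega_ne_zero {ω : F} (hω : ∀ a : F, a ≠ 0 → ∃ k : ℕ, ω ^ k = a)
    (h3 : 3 ≤ Fintype.card F) : ω ≠ 0 := by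
  classical
  have hex : ∃ a : F, a ≠ 0 ∧ a ≠ 1 := by
    by_contra hc
    push_neg at hc
    have hsub : (Finset.univ : Finset F) ⊆ {0, 1} := by
      intro a _
      rcases eq_or_ne a 0 with h | h
      · simp [h]
      · simp [hc a h]
    have := Finset.card_le_card hsub
    have h2 : ({0, 1} : Finset F).card ≤ 2 := Finset.card_insert_le _ _ |>.trans (by simp)
    rw [Finset.card_univ] at this
    omega
  obtain ⟨a, ha0, ha1⟩ := hex
  intro h0
  obtain ⟨k, hk⟩ := hω a ha0
  rcases Nat.eq_zero_or_pos k with hk0 | hk0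
  · subst hk0; simp at hk; exact ha1 hk.symm
  · rw [h0, zero_pow (by omega)] at hk
    exact ha0 hk.symm

private lemma order_omega {ω : F} (hω : ∀ a : F, a ≠ 0 → ∃ k : ℕ, ω ^ k = a)
    (h3 : 3 ≤ Fintype.card F) : orderOf ω = Fintype.card F - 1 := by
  classical
  have hω0 : ω ≠ 0 := omega_ne_zero hω h3
  have hfin : ω ^ (Fintype.card F - 1) = 1 := FiniteField.pow_card_sub_one_eq_one ω hω0
  have hdvd : orderOf ω ∣ Fintype.card F - 1 := orderOf_dvd_of_pow_eq_one hfin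
  have hford : IsOfFinOrder ω := isOfFinOrder_iff_pow_eq_one.mpr ⟨_, by omega, hfin⟩
  have hpos : 0 < orderOf ω := hford.orderOf_pos
  have hsurj : Function.Surjective
      (fun i : Fin (orderOf ω) => (⟨ω ^ (i : ℕ), pow_ne_zero _ hω0⟩ : {a : F // a ≠ 0})) := by
    rintro ⟨a, ha⟩
    obtain ⟨k, hk⟩ := hω a ha
    exact ⟨⟨k % orderOf ω, Nat.mod_lt _ hpos⟩, Subtype.ext (by simpa [pow_mod_orderOf] using hk)⟩
  have hle := Nat.card_le_card_of_surjective _ hsurj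
  rw [ncard_ne_zero, Nat.card_eq_fintype_card, Fintype.card_fin] at hle
  exact Nat.le_antisymm (Nat.le_of_dvd (by omega) hdvd) hle

private lemma iota_inj {ω : F} (hω : ∀ a : F, a ≠ 0 → ∃ k : ℕ, ω ^ k = a)
    (h3 : 3 ≤ Fintype.card F) (hω0 : ω ≠ 0) :
    Function.Injective (fun i : Fin (Fintype.card F - 1) =>
      (⟨ω ^ (i : ℕ), pow_ne_zero _ hω0⟩ : {a : F // a ≠ 0})) := by
  intro i j hij
  have h1 : ω ^ (i : ℕ) = ω ^ (j : ℕ) := congrArg Subtype.val hij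
  set u : Fˣ := Units.mk0 ω hω0 with hu
  have hord : orderOf u = Fintype.card F - 1 := by
    rw [← orderOf_units (y := u)]
    exact order_omega hω h3
  have h2 : u ^ (i : ℕ) = u ^ (j : ℕ) := by
    ext
    simpa [hu] using h1
  have := pow_injOn_Iio_orderOf (x := u) (by rw [hord]; exact Set.mem_Iio.2 i.isLt)
    (by rw [hord]; exact Set.mem_Iio.2 j.isLt) h2
  exact Fin.ext this

private lemma iota_surj {ω : F} (hω : ∀ a : F, a ≠ 0 → ∃ k : ℕ, ω ^ k = a)
    (h3 : 3 ≤ Fintype.card F) (hω0 : ω ≠ 0) :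
    Function.Surjective (fun i : Fin (Fintype.card F - 1) =>
      (⟨ω ^ (i : ℕ), pow_ne_zero _ hω0⟩ : {a : F // a ≠ 0})) := by
  rintro ⟨a, ha⟩
  obtain ⟨k, hk⟩ := hω a ha
  have hord := order_omega hω h3
  refine ⟨⟨k % (Fintype.card F - 1), Nat.mod_lt _ (by omega)⟩, Subtype.ext ?_⟩
  simpa [← hord, pow_mod_orderOf] using hk

end Aux2

section Aux3

variable {F : Type*} [Field F] [Fintype F]

private lemma finite_deg (e : ℕ) (p : F[X] → Prop) :
    Finite {f : F[X] // f.natDegree = e ∧ p f} := by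
  apply Finite.of_injective (fun f : {f : F[X] // f.natDegree = e ∧ p f} =>
    (fun i : Fin (e + 1) => f.1.coeff (i : ℕ)))
  rintro ⟨f, hf, _⟩ ⟨g, hg, _⟩ h
  ext1
  ext k
  rcases lt_or_ge k (e + 1) with hk | hk
  · exact congrFun h ⟨k, hk⟩
  · rw [Polynomial.coeff_eq_zero_of_natDegree_lt (by omega : f.natDegree < k),
      Polynomial.coeff_eq_zero_of_natDegree_lt (by omega : g.natDegree < k)]

private lemma my_card_sigma {ι : Type*} [Fintype ι] (α : ι → Type*) [∀ i, Finite (α i)] :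
    Nat.card (Σ i, α i) = ∑ i, Nat.card (α i) := by
  classical
  haveI : ∀ i, Fintype (α i) := fun i => Fintype.ofFinite _
  simp [Nat.card_eq_fintype_card]

private lemma finite_degs (s : Finset ℕ) (p : F[X] → Prop) :
    Finite {f : F[X] // f.natDegree ∈ s ∧ p f} := by
  apply Finite.of_injective (fun f : {f : F[X] // f.natDegree ∈ s ∧ p f} =>
    (fun i : Fin (s.sup id + 1) => f.1.coeff (i : ℕ)))
  rintro ⟨f, hf, _⟩ ⟨g, hg, _⟩ h
  have hf' : f.natDegree ≤ s.sup id := Finset.le_sup (f := id) hf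
  have hg' : g.natDegree ≤ s.sup id := Finset.le_sup (f := id) hg
  ext1
  ext k
  rcases lt_or_ge k (s.sup id + 1) with hk | hk
  · exact congrFun h ⟨k, hk⟩
  · rw [Polynomial.coeff_eq_zero_of_natDegree_lt (by omega : f.natDegree < k),
      Polynomial.coeff_eq_zero_of_natDegree_lt (by omega : g.natDegree < k)]

private lemma card_decomp (s : Finset ℕ) (p : F[X] → Prop) :
    Nat.card {f : F[X] // f.natDegree ∈ s ∧ p f}
      = ∑ e ∈ s, Nat.card {f : F[X] // f.natDegree = e ∧ p f} := by
  classical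
  induction s using Finset.induction_on with
  | empty =>
      rw [Finset.sum_empty]
      have : IsEmpty {f : F[X] // f.natDegree ∈ (∅ : Finset ℕ) ∧ p f} :=
        ⟨fun f => by simpa using f.2.1⟩
      simp
  | @insert a s ha ih =>
      have hdis : Disjoint (fun f : F[X] => f.natDegree = a ∧ p f)
          (fun f : F[X] => f.natDegree ∈ s ∧ p f) :=
        Pi.disjoint_iff.mpr fun f => Prop.disjoint_iff.mpr (by
          rintro ⟨⟨h1, -⟩, ⟨h2, -⟩⟩
          exact ha (h1 ▸ h2))
      have E1 : {f : F[X] // f.natDegree ∈ insert a s ∧ p f}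
          ≃ {f : F[X] // (f.natDegree = a ∧ p f) ∨ (f.natDegree ∈ s ∧ p f)} :=
        Equiv.subtypeEquivRight fun f => by
          simp only [Finset.mem_insert]
          tauto
      have E2 := subtypeOrEquiv _ _ hdis
      haveI : Finite {f : F[X] // f.natDegree = a ∧ p f} := finite_deg a p
      haveI : Finite {f : F[X] // f.natDegree ∈ s ∧ p f} := finite_degs s p
      rw [Nat.card_congr (E1.trans E2), Nat.card_sum, ih, Finset.sum_insert ha]

end Aux3

section Aux4
variable {F : Type*} [Field F] [Fintype F]

private lemma card_tuples_eq_perms {ω : F} (hω : ∀ a : F, a ≠ 0 → ∃ k : ℕ, ω ^ k = a)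
    (h3 : 3 ≤ Fintype.card F) (cond : (Fin (Fintype.card F - 1) → F) → Prop) :
    Nat.card {x : Fin (Fintype.card F - 1) → F //
        Function.Injective x ∧ (∀ i, x i ≠ 0) ∧ cond x}
      = Nat.card {σ : Equiv.Perm (Fin (Fintype.card F - 1)) //
          cond (fun i => ω ^ ((σ i : ℕ)))} := by
  have hω0 : ω ≠ 0 := omega_ne_zero hω h3
  let ι : Fin (Fintype.card F - 1) → {a : F // a ≠ 0} :=
    fun i => ⟨ω ^ (i : ℕ), pow_ne_zero _ hω0⟩
  have hιinj : Function.Injective ι := iota_inj hω h3 hω0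
  let ιe : Fin (Fintype.card F - 1) ≃ {a : F // a ≠ 0} :=
    Equiv.ofBijective ι ⟨hιinj, iota_surj hω h3 hω0⟩
  symm
  apply Nat.card_congr
  refine Equiv.ofBijective (fun σ => ⟨fun i => ω ^ ((σ.1 i : ℕ)),
    fun i j hij => σ.1.injective (hιinj (Subtype.ext hij)),
    fun i => pow_ne_zero _ hω0, σ.2⟩) ⟨?_, ?_⟩
  · rintro ⟨σ, hσ⟩ ⟨τ, hτ⟩ h
    have h1 : ∀ i, ω ^ ((σ i : ℕ)) = ω ^ ((τ i : ℕ)) := fun i =>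
      congrFun (congrArg Subtype.val h) i
    exact Subtype.ext (Equiv.ext fun i => hιinj (Subtype.ext (h1 i)))
  · rintro ⟨x, hinj, hnz, hc⟩
    let y : Fin (Fintype.card F - 1) → Fin (Fintype.card F - 1) :=
      fun i => ιe.symm ⟨x i, hnz i⟩
    have hyinj : Function.Injective y := fun i j hij =>
      hinj (congrArg Subtype.val (ιe.symm.injective hij))
    have hybij : Function.Bijective y := Finite.injective_iff_bijective.mp hyinj
    let e := Equiv.ofBijective y hybij
    have hval : ∀ i, ω ^ ((e i : Fin (Fintype.card F - 1)) : ℕ) = x i := by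
      intro i
      exact congrArg Subtype.val (ιe.apply_symm_apply ⟨x i, hnz i⟩)
    have hfun : (fun i => ω ^ ((e i : Fin (Fintype.card F - 1)) : ℕ)) = x := funext hval
    refine ⟨⟨e, ?_⟩, Subtype.ext hfun⟩
    rw [hfun]
    exact hc

private lemma exists_poly {ω : F} (hω : ∀ a : F, a ≠ 0 → ∃ k : ℕ, ω ^ k = a)
    (h4 : 4 ≤ Fintype.card F) (x : Fin (Fintype.card F - 1) → F)
    (hinj : Function.Injective x) (hnz : ∀ i, x i ≠ 0) :
    ∃ f : F[X], (f.natDegree ∈ Finset.Icc 1 (Fintype.card F - 2) ∧ f.coeff 0 = 0 ∧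
      Function.Bijective fun a => f.eval a) ∧
      ∀ i : Fin (Fintype.card F - 1), f.eval (ω ^ (i : ℕ)) = x i := by
  classical
  have h3 : 3 ≤ Fintype.card F := by omega
  have hω0 : ω ≠ 0 := omega_ne_zero hω h3
  let ι : Fin (Fintype.card F - 1) → {a : F // a ≠ 0} :=
    fun i => ⟨ω ^ (i : ℕ), pow_ne_zero _ hω0⟩
  let ιe : Fin (Fintype.card F - 1) ≃ {a : F // a ≠ 0} :=
    Equiv.ofBijective ι ⟨iota_inj hω h3 hω0, iota_surj hω h3 hω0⟩
  let g : F → F := fun a => if h : a = 0 then 0 else x (ιe.symm ⟨a, h⟩)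
  have hg0 : g 0 = 0 := dif_pos rfl
  have hgω : ∀ i : Fin (Fintype.card F - 1), g (ω ^ (i : ℕ)) = x i := by
    intro i
    have hne : ω ^ (i : ℕ) ≠ 0 := pow_ne_zero _ hω0
    have h5 : ιe.symm ⟨ω ^ (i : ℕ), hne⟩ = i := by
      rw [Equiv.symm_apply_eq]
      rfl
    simp only [g, dif_neg hne, h5]
  have hginj : Function.Injective g := by
    intro a b hab
    by_cases ha : a = 0 <;> by_cases hb : b = 0
    · rw [ha, hb]
    · exfalso
      rw [ha] at hab
      simp only [g, dif_pos rfl, dif_neg hb] at hab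
      exact hnz _ hab.symm
    · exfalso
      rw [hb] at hab
      simp only [g, dif_neg ha, dif_pos rfl] at hab
      exact hnz _ hab
    · simp only [g, dif_neg ha, dif_neg hb] at hab
      have h6 := ιe.symm.injective (hinj hab)
      exact congrArg Subtype.val h6
  have hgbij : Function.Bijective g := Finite.injective_iff_bijective.mp hginj
  let f : F[X] := Lagrange.interpolate Finset.univ id g
  have heval : ∀ a : F, f.eval a = g a := fun a =>
    Lagrange.eval_interpolate_at_node g (Set.injOn_id _) (Finset.mem_univ a)
  have hfne : f ≠ 0 := by
    intro h0
    have h7 := heval (ω ^ ((⟨0, by omega⟩ : Fin (Fintype.card F - 1)) : ℕ))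
    rw [h0, eval_zero, hgω] at h7
    exact hnz _ h7.symm
  have hdeg1 : f.natDegree < Fintype.card F := by
    rw [Polynomial.natDegree_lt_iff_degree_lt hfne]
    have h8 := Lagrange.degree_interpolate_lt g (Set.injOn_id ((Finset.univ : Finset F) : Set F))
    rwa [Finset.card_univ] at h8
  have hcoeff0 : f.coeff 0 = 0 := by
    rw [Polynomial.coeff_zero_eq_eval_zero, heval, hg0]
  have hbij : Function.Bijective fun a => f.eval a := by
    have h9 : (fun a => f.eval a) = g := funext heval
    rw [h9]
    exact hgbij
  have hsum0 : ∑ b : F, b = 0 := by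
    have h10 := aux_sum_pow (F := F) 1 one_ne_zero
    rw [if_neg (fun hdvd => by have := Nat.le_of_dvd one_pos hdvd; omega)] at h10
    simpa using h10
  have hcoefftop : f.coeff (Fintype.card F - 1) = 0 := by
    have hk := key_sum h4 f (by omega) 0 (by omega)
    simp only [pow_zero, one_mul, Nat.sub_zero] at hk
    have hsum : ∑ a : F, f.eval a = 0 := by
      calc ∑ a : F, f.eval a = ∑ a : F, g a := Finset.sum_congr rfl fun a _ => heval a
        _ = ∑ b : F, b := Fintype.sum_bijective g hgbij g id fun a => rfl
        _ = 0 := hsum0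
    rw [hsum] at hk
    exact neg_eq_zero.mp hk.symm
  have hdeg2 : f.natDegree ≤ Fintype.card F - 2 := by
    by_contra hgt
    have hEq : f.natDegree = Fintype.card F - 1 := by omega
    have h11 := Polynomial.leadingCoeff_ne_zero.mpr hfne
    rw [Polynomial.leadingCoeff, hEq, hcoefftop] at h11
    exact h11 rfl
  have hdegge : 1 ≤ f.natDegree := by
    by_contra hlt
    have h0 : f.natDegree = 0 := by omega
    have h12 := Polynomial.eq_C_of_natDegree_eq_zero h0
    rw [hcoeff0, map_zero] at h12
    exact hfne h12
  exact ⟨f, ⟨Finset.mem_Icc.2 ⟨hdegge, hdeg2⟩, hcoeff0, hbij⟩, fun i => by rw [heval, hgω]⟩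

private lemma poly_eval_inj {ω : F} (hω : ∀ a : F, a ≠ 0 → ∃ k : ℕ, ω ^ k = a)
    (h4 : 4 ≤ Fintype.card F) {f g : F[X]}
    (hf : f.natDegree ≤ Fintype.card F - 2) (hg : g.natDegree ≤ Fintype.card F - 2)
    (hf0 : f.coeff 0 = 0) (hg0 : g.coeff 0 = 0)
    (h : ∀ i : Fin (Fintype.card F - 1), f.eval (ω ^ (i : ℕ)) = g.eval (ω ^ (i : ℕ))) :
    f = g := by
  have h3 : 3 ≤ Fintype.card F := by omega
  apply poly_funext (by omega) (by omega)
  intro a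
  rcases eq_or_ne a 0 with rfl | ha
  · rw [← Polynomial.coeff_zero_eq_eval_zero, ← Polynomial.coeff_zero_eq_eval_zero, hf0, hg0]
  · obtain ⟨i, hi⟩ := iota_surj hω h3 (omega_ne_zero hω h3) ⟨a, ha⟩
    have h1 : ω ^ (i : ℕ) = a := congrArg Subtype.val hi
    rw [← h1]
    exact h i

private lemma cond_iff {ω : F} (hω : ∀ a : F, a ≠ 0 → ∃ k : ℕ, ω ^ k = a)
    (h4 : 4 ≤ Fintype.card F) {d m : ℕ}
    (hd1 : 1 ≤ d) (hd2 : d ≤ Fintype.card F - 3) (hm : m = Fintype.card F - 1 - d)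
    (f : F[X]) (hdeg : f.natDegree ∈ Finset.Icc 1 (Fintype.card F - 2)) :
    (∀ l ∈ Finset.Icc 1 m,
        ∑ i : Fin (Fintype.card F - 1), ω ^ ((i : ℕ) * l) * f.eval (ω ^ (i : ℕ)) = 0)
      ↔ f.natDegree ∈ Finset.Icc 1 (d - 1) := by
  classical
  rw [Finset.mem_Icc] at hdeg
  have h3 : 3 ≤ Fintype.card F := by omega
  have hω0 : ω ≠ 0 := omega_ne_zero hω h3
  have hfne : f ≠ 0 := by
    intro h0
    rw [h0, natDegree_zero] at hdeg
    omega
  let ι : Fin (Fintype.card F - 1) → {a : F // a ≠ 0} :=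
    fun i => ⟨ω ^ (i : ℕ), pow_ne_zero _ hω0⟩
  let ιe : Fin (Fintype.card F - 1) ≃ {a : F // a ≠ 0} :=
    Equiv.ofBijective ι ⟨iota_inj hω h3 hω0, iota_surj hω h3 hω0⟩
  have hre : ∀ l, 1 ≤ l →
      (∑ i : Fin (Fintype.card F - 1), ω ^ ((i : ℕ) * l) * f.eval (ω ^ (i : ℕ)))
        = ∑ a : F, a ^ l * f.eval a := by
    intro l hl
    have e1 : ∑ a ∈ Finset.univ \ {(0 : F)}, a ^ l * f.eval a = ∑ a : F, a ^ l * f.eval a := by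
      rw [← Finset.sum_sdiff (Finset.subset_univ {(0 : F)}), Finset.sum_singleton,
        zero_pow (by omega : l ≠ 0), zero_mul, add_zero]
    have e2 : ∑ a ∈ Finset.univ \ {(0 : F)}, a ^ l * f.eval a
        = ∑ a : {a : F // a ≠ 0}, (a : F) ^ l * f.eval (a : F) :=
      Finset.sum_subtype _ (fun a => by simp) _
    have e3 : ∑ a : {a : F // a ≠ 0}, (a : F) ^ l * f.eval (a : F)
        = ∑ i : Fin (Fintype.card F - 1), ω ^ ((i : ℕ) * l) * f.eval (ω ^ (i : ℕ)) := by
      rw [← Equiv.sum_comp ιe (fun a : {a : F // a ≠ 0} => (a : F) ^ l * f.eval (a : F))]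
      refine Finset.sum_congr rfl fun i _ => ?_
      have : ((ιe i : F)) = ω ^ (i : ℕ) := rfl
      rw [this, ← pow_mul]
    rw [← e3, ← e2]
    exact e1
  constructor
  · intro hc
    refine Finset.mem_Icc.2 ⟨hdeg.1, ?_⟩
    by_contra hgt
    push_neg at hgt
    have hl1 : 1 ≤ Fintype.card F - 1 - f.natDegree ∧ Fintype.card F - 1 - f.natDegree ≤ m := by
      omega
    have hc1 := hc _ (Finset.mem_Icc.2 hl1)
    rw [hre _ hl1.1, key_sum h4 f (by omega) _ (by omega)] at hc1
    have hQ : Fintype.card F - 1 - (Fintype.card F - 1 - f.natDegree) = f.natDegree := by omega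
    rw [hQ, neg_eq_zero, Polynomial.coeff_natDegree] at hc1
    exact hfne (Polynomial.leadingCoeff_eq_zero.mp hc1)
  · intro hdle l hlmem
    rw [Finset.mem_Icc] at hlmem hdle
    rw [hre l hlmem.1, key_sum h4 f (by omega) l (by omega), neg_eq_zero]
    apply Polynomial.coeff_eq_zero_of_natDegree_lt
    omega
end Aux4


theorem stmt_13 {F : Type*} [Field F] [Fintype F] (q : ℕ) (hq : Fintype.card F = q)
    (ω : F) (hω : ∀ a : F, a ≠ 0 → ∃ k : ℕ, ω ^ k = a)
    (d m : ℕ) (hd1 : 1 ≤ d) (hd2 : d ≤ q - 3) (hm : m = q - 1 - d) :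
    Nat.card {x : Fin (q - 1) → F // Function.Injective x ∧ (∀ i, x i ≠ 0) ∧
        ∀ l ∈ Finset.Icc 1 m, ∑ i : Fin (q - 1), ω ^ ((i : ℕ) * l) * x i = 0} =
      Nat.card {σ : Equiv.Perm (Fin (q - 1)) //
        ∀ l ∈ Finset.Icc 1 m, ∑ i : Fin (q - 1), ω ^ ((i : ℕ) * l) * ω ^ ((σ i : ℕ)) = 0} ∧
    Nat.card {f : F[X] // f.natDegree = d ∧ f.coeff 0 = 0 ∧
        Function.Bijective fun x => f.eval x} +
      (∑ e ∈ Finset.Icc (d + 1) (q - 2),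
        Nat.card {f : F[X] // f.natDegree = e ∧ f.coeff 0 = 0 ∧
          Function.Bijective fun x => f.eval x}) +
      Nat.card {x : Fin (q - 1) → F // Function.Injective x ∧ (∀ i, x i ≠ 0) ∧
        ∀ l ∈ Finset.Icc 1 m, ∑ i : Fin (q - 1), ω ^ ((i : ℕ) * l) * x i = 0} =
      Nat.factorial (q - 1) := by
  subst hq
  have h4 : 4 ≤ Fintype.card F := by omega
  have h3 : 3 ≤ Fintype.card F := by omega
  have hω0 : ω ≠ 0 := omega_ne_zero hω h3
  constructor
  · exact card_tuples_eq_perms hω h3 (fun x => ∀ l ∈ Finset.Icc 1 m,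
      ∑ i : Fin (Fintype.card F - 1), ω ^ ((i : ℕ) * l) * x i = 0)
  · -- count of all injective nonzero tuples
    have h1 : Finset.Icc 1 (Fintype.card F - 2) = Finset.Ico 1 (Fintype.card F - 1) := by
      rw [← Finset.Ico_add_one_right_eq_Icc,
        show (Fintype.card F - 2) + 1 = Fintype.card F - 1 from by omega]
    have h2 : Finset.Icc 1 (d - 1) = Finset.Ico 1 d := by
      rw [← Finset.Ico_add_one_right_eq_Icc, show (d - 1) + 1 = d from by omega]
    have h3' : Finset.Icc (d + 1) (Fintype.card F - 2)
        = Finset.Ico (d + 1) (Fintype.card F - 1) := by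
      rw [← Finset.Ico_add_one_right_eq_Icc,
        show (Fintype.card F - 2) + 1 = Fintype.card F - 1 from by omega]
    have hb : d ≤ Fintype.card F - 1 := by omega
    have hcc : d < Fintype.card F - 1 := by omega
    have key1 : Nat.card {x : Fin (Fintype.card F - 1) → F //
        Function.Injective x ∧ (∀ i, x i ≠ 0)} = Nat.factorial (Fintype.card F - 1) := by
      have e0 : {x : Fin (Fintype.card F - 1) → F // Function.Injective x ∧ (∀ i, x i ≠ 0)}
          ≃ {x : Fin (Fintype.card F - 1) → F //
              Function.Injective x ∧ (∀ i, x i ≠ 0) ∧ True} :=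
        Equiv.subtypeEquivRight fun x => by tauto
      rw [Nat.card_congr e0, card_tuples_eq_perms hω h3 (fun _ => True),
        Nat.card_congr (Equiv.subtypeUnivEquiv fun _ => trivial),
        Nat.card_eq_fintype_card, Fintype.card_perm, Fintype.card_fin]
    -- the evaluation bijection between polynomials and tuples
    let Ψ : {f : F[X] // f.natDegree ∈ Finset.Icc 1 (Fintype.card F - 2) ∧ f.coeff 0 = 0 ∧
        Function.Bijective fun x => f.eval x} →
        {x : Fin (Fintype.card F - 1) → F // Function.Injective x ∧ (∀ i, x i ≠ 0)} :=
      fun f => ⟨fun i => f.1.eval (ω ^ (i : ℕ)),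
        fun i j hij => iota_inj hω h3 hω0 (Subtype.ext (f.2.2.2.injective hij)),
        fun i h0 => pow_ne_zero (i : ℕ) hω0 (f.2.2.2.injective
          (h0.trans (by rw [← Polynomial.coeff_zero_eq_eval_zero, f.2.2.1])))⟩
    have hΨ : Function.Bijective Ψ := by
      constructor
      · rintro ⟨f, hf1, hf2, hf3⟩ ⟨g, hg1, hg2, hg3⟩ h
        apply Subtype.ext
        have h' : ∀ i : Fin (Fintype.card F - 1),
            f.eval (ω ^ (i : ℕ)) = g.eval (ω ^ (i : ℕ)) := fun i =>
          congrFun (congrArg Subtype.val h) i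
        exact poly_eval_inj hω h4 (Finset.mem_Icc.1 hf1).2 (Finset.mem_Icc.1 hg1).2
          hf2 hg2 h'
      · rintro ⟨x, hinj, hnz⟩
        obtain ⟨f, hfA, hfev⟩ := exists_poly hω h4 x hinj hnz
        exact ⟨⟨f, hfA⟩, Subtype.ext (funext hfev)⟩
    let EΨ := Equiv.ofBijective Ψ hΨ
    have key2 : Nat.card {x : Fin (Fintype.card F - 1) → F //
        Function.Injective x ∧ (∀ i, x i ≠ 0)}
        = ∑ e ∈ Finset.Icc 1 (Fintype.card F - 2),
            Nat.card {f : F[X] // f.natDegree = e ∧ f.coeff 0 = 0 ∧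
              Function.Bijective fun x => f.eval x} := by
      rw [← Nat.card_congr EΨ, card_decomp]
    have key3 : Nat.card {x : Fin (Fintype.card F - 1) → F //
        Function.Injective x ∧ (∀ i, x i ≠ 0) ∧
        ∀ l ∈ Finset.Icc 1 m,
          ∑ i : Fin (Fintype.card F - 1), ω ^ ((i : ℕ) * l) * x i = 0}
        = ∑ e ∈ Finset.Icc 1 (d - 1),
            Nat.card {f : F[X] // f.natDegree = e ∧ f.coeff 0 = 0 ∧
              Function.Bijective fun x => f.eval x} := by
      have E1 : {x : Fin (Fintype.card F - 1) → F // Function.Injective x ∧ (∀ i, x i ≠ 0) ∧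
          ∀ l ∈ Finset.Icc 1 m,
            ∑ i : Fin (Fintype.card F - 1), ω ^ ((i : ℕ) * l) * x i = 0}
          ≃ {y : {x : Fin (Fintype.card F - 1) → F //
              Function.Injective x ∧ (∀ i, x i ≠ 0)} //
              ∀ l ∈ Finset.Icc 1 m,
                ∑ i : Fin (Fintype.card F - 1), ω ^ ((i : ℕ) * l) * y.1 i = 0} :=
        ((Equiv.subtypeSubtypeEquivSubtypeInter _ _).trans
          (Equiv.subtypeEquivRight fun x => and_assoc)).symm
      have E2 : {g : {f : F[X] // f.natDegree ∈ Finset.Icc 1 (Fintype.card F - 2) ∧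
            f.coeff 0 = 0 ∧ Function.Bijective fun x => f.eval x} //
            ∀ l ∈ Finset.Icc 1 m,
              ∑ i : Fin (Fintype.card F - 1), ω ^ ((i : ℕ) * l) * (Ψ g).1 i = 0}
          ≃ {y : {x : Fin (Fintype.card F - 1) → F //
              Function.Injective x ∧ (∀ i, x i ≠ 0)} //
              ∀ l ∈ Finset.Icc 1 m,
                ∑ i : Fin (Fintype.card F - 1), ω ^ ((i : ℕ) * l) * y.1 i = 0} :=
        Equiv.subtypeEquiv EΨ fun g => Iff.rfl
      have E3 : {g : {f : F[X] // f.natDegree ∈ Finset.Icc 1 (Fintype.card F - 2) ∧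
            f.coeff 0 = 0 ∧ Function.Bijective fun x => f.eval x} //
            ∀ l ∈ Finset.Icc 1 m,
              ∑ i : Fin (Fintype.card F - 1), ω ^ ((i : ℕ) * l) * (Ψ g).1 i = 0}
          ≃ {g : {f : F[X] // f.natDegree ∈ Finset.Icc 1 (Fintype.card F - 2) ∧
            f.coeff 0 = 0 ∧ Function.Bijective fun x => f.eval x} //
            g.1.natDegree ∈ Finset.Icc 1 (d - 1)} :=
        Equiv.subtypeEquivRight fun g => cond_iff hω h4 hd1 hd2 hm g.1 g.2.1
      have E4 := Equiv.subtypeSubtypeEquivSubtypeInter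
        (fun f : F[X] => f.natDegree ∈ Finset.Icc 1 (Fintype.card F - 2) ∧
          f.coeff 0 = 0 ∧ Function.Bijective fun x => f.eval x)
        (fun f : F[X] => f.natDegree ∈ Finset.Icc 1 (d - 1))
      have E5 : {f : F[X] // (f.natDegree ∈ Finset.Icc 1 (Fintype.card F - 2) ∧
            f.coeff 0 = 0 ∧ Function.Bijective fun x => f.eval x) ∧
            f.natDegree ∈ Finset.Icc 1 (d - 1)}
          ≃ {f : F[X] // f.natDegree ∈ Finset.Icc 1 (d - 1) ∧
            f.coeff 0 = 0 ∧ Function.Bijective fun x => f.eval x} := by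
        have hiff : ∀ g : F[X], ((g.natDegree ∈ Finset.Icc 1 (Fintype.card F - 2) ∧
            g.coeff 0 = 0 ∧ Function.Bijective fun x => g.eval x) ∧
            g.natDegree ∈ Finset.Icc 1 (d - 1))
            ↔ (g.natDegree ∈ Finset.Icc 1 (d - 1) ∧
              g.coeff 0 = 0 ∧ Function.Bijective fun x => g.eval x) := by
          intro g
          simp only [Finset.mem_Icc]
          constructor
          · rintro ⟨⟨_, h2', h3''⟩, h5⟩
            exact ⟨h5, h2', h3''⟩
          · rintro ⟨h1', h2', h3''⟩
            refine ⟨⟨⟨h1'.1, ?_⟩, h2', h3''⟩, h1'⟩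
            exact le_trans h1'.2 (le_trans (Nat.sub_le d 1)
              (le_trans hd2 (Nat.sub_le_sub_left (by norm_num) _)))
        exact Equiv.subtypeEquivRight hiff
      rw [Nat.card_congr (E1.trans ((E2.symm).trans (E3.trans (E4.trans E5)))), card_decomp]
    rw [key3, ← key2.symm.trans key1, h1, h2, h3',
      ← Finset.sum_Ico_consecutive _ hd1 hb,
      Finset.sum_eq_sum_Ico_succ_bot hcc]
    ring
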